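/- arXiv:2408.15202 — 6 statements merged into one kernel-verified Lean document; each statement's English description precedes it below -/
import Mathlib

section
/- Fix i ∈ [2n] and v ∈ F₂^{2n} with v_i = 0. Define s(v,i) = I + v e_i^T + J e_i v^T J + v_{2n+1-i} e_{2n+1-i} e_i^T over F₂, where J is the 2n×2n reverse diagonal matrix. Then s(v,i) is symplectic: s(v,i)^T J s(v,i) = J. Moreover s(v,i)^2 = I and s(v,i) e_i = e_i + v. -/
open Matrix

/-- The `2n × 2n` reverse diagonal matrix over `F₂`. -/
def Jmat (n : ℕ) : Matrix (Fin (2 * n)) (Fin (2 * n)) (ZMod 2) :=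
  Matrix.of fun i j => if j = i.rev then 1 else 0

/-- The symplectic group `Sp(2n)` over `F₂` with respect to the form `xᵀ J y`. -/
def Sp (n : ℕ) : Set (Matrix (Fin (2 * n)) (Fin (2 * n)) (ZMod 2)) :=
  {C | Cᵀ * Jmat n * C = Jmat n}

/-- The symplectic Gaussian move
`s(v,i) = I + v e_iᵀ + J e_i vᵀ J + v_{2n+1-i} e_{2n+1-i} e_iᵀ`. -/
def smat {n : ℕ} (v : Fin (2 * n) → ZMod 2) (i : Fin (2 * n)) :
    Matrix (Fin (2 * n)) (Fin (2 * n)) (ZMod 2) :=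
  1 + Matrix.vecMulVec v (Pi.single i 1)
    + Matrix.vecMulVec (Pi.single i.rev 1) (fun j => v j.rev)
    + v i.rev • Matrix.single i.rev i 1

section aux

variable {m : ℕ}

lemma vv_mul_vv (u w u' w' : Fin m → ZMod 2) :
    vecMulVec u w * vecMulVec u' w' = (w ⬝ᵥ u') • vecMulVec u w' := by
  ext a b
  simp only [mul_apply, vecMulVec_apply, Matrix.smul_apply, smul_eq_mul, dotProduct,
    Finset.sum_mul, Finset.mul_sum]
  exact Finset.sum_congr rfl fun x _ => by ring

lemma vv_mulVec (u w x : Fin m → ZMod 2) :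
    (vecMulVec u w).mulVec x = (w ⬝ᵥ x) • u := by
  funext a
  simp only [mulVec, dotProduct, vecMulVec_apply, Pi.smul_apply, smul_eq_mul,
    Finset.sum_mul]
  exact Finset.sum_congr rfl fun x _ => by ring

lemma J_mul_vv {n : ℕ} (u w : Fin (2 * n) → ZMod 2) :
    Jmat n * vecMulVec u w = vecMulVec (fun j => u j.rev) w := by
  ext a b
  simp [Jmat, mul_apply, vecMulVec_apply, ite_mul]

lemma vv_mul_J {n : ℕ} (u w : Fin (2 * n) → ZMod 2) :
    vecMulVec u w * Jmat n = vecMulVec u (fun j => w j.rev) := by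
  ext a b
  have : ∀ k : Fin (2 * n), (b = k.rev) = (k = b.rev) := by
    intro k
    simp only [eq_iff_iff]
    constructor <;> rintro rfl <;> simp [Fin.rev_rev]
  simp [Jmat, mul_apply, vecMulVec_apply, mul_ite, this]

lemma addself {n : ℕ} (X : Matrix (Fin (2 * n)) (Fin (2 * n)) (ZMod 2)) :
    X + X = 0 := by
  ext a b
  simp only [Matrix.add_apply, Matrix.zero_apply]
  exact CharTwo.add_self_eq_zero _

end aux

theorem stmt_9 {n : ℕ} (i : Fin (2 * n)) (v : Fin (2 * n) → ZMod 2)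
    (hv : v i = 0) :
    (smat v i)ᵀ * Jmat n * smat v i = Jmat n ∧
    smat v i * smat v i = 1 ∧
    (smat v i).mulVec (Pi.single i 1) = Pi.single i 1 + v := by
  set e : Fin (2 * n) → ZMod 2 := Pi.single i 1 with he
  set f : Fin (2 * n) → ZMod 2 := Pi.single i.rev 1 with hf
  set w : Fin (2 * n) → ZMod 2 := fun j => v j.rev with hw
  set c : ZMod 2 := v i.rev with hc
  have hne : i.rev ≠ i := by
    intro h
    have h2 := congrArg Fin.val h
    rw [Fin.val_rev] at h2
    omega
  -- rewrite smat with vecMulVec only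
  have hs : smat v i = 1 + (vecMulVec v e + vecMulVec f w + c • vecMulVec f e) := by
    rw [smat, single_eq_single_vecMulVec_single, ← he, ← hf, ← hw, ← hc,
      add_assoc, add_assoc, add_assoc]
  set M : Matrix (Fin (2 * n)) (Fin (2 * n)) (ZMod 2) :=
    vecMulVec v e + vecMulVec f w + c • vecMulVec f e with hM
  -- dot product facts
  have dev : e ⬝ᵥ v = 0 := by rw [he, single_one_dotProduct, hv]
  have def' : e ⬝ᵥ f = 0 := by
    rw [he, single_one_dotProduct, hf, Pi.single_eq_of_ne' hne]
  have dwf : w ⬝ᵥ f = 0 := by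
    rw [hf, dotProduct_single_one, hw]
    simpa [Fin.rev_rev] using hv
  have dwv : w ⬝ᵥ v = 0 := by
    rw [dotProduct]
    refine Finset.sum_ninvolution Fin.rev ?_ ?_ (fun a => Finset.mem_univ _)
      (fun a => Fin.rev_rev a) <;> intro a
    · show v a.rev * v a + v a.rev.rev * v a.rev = 0
      rw [Fin.rev_rev, mul_comm (v a) (v a.rev)]
      exact CharTwo.add_self_eq_zero _
    · intro h hcon
      have h2 := congrArg Fin.val hcon
      rw [Fin.val_rev] at h2
      omega
  have dee : e ⬝ᵥ e = 1 := by
    rw [he, single_one_dotProduct, Pi.single_eq_same]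
  -- M * M = 0
  have hMM : M * M = 0 := by
    rw [hM]
    simp only [Matrix.add_mul, Matrix.mul_add, Matrix.smul_mul, Matrix.mul_smul,
      vv_mul_vv, dev, def', dwf, dwv, zero_smul, smul_zero, add_zero, zero_add]
  -- f ∘ rev = e and e ∘ rev = f, v ∘ rev = w etc.
  have hwp : ∀ j, w j = v j.rev := fun _ => rfl
  have hfe : ∀ j : Fin (2 * n), f j.rev = e j := by
    intro j
    rw [hf, he, Pi.single_apply, Pi.single_apply]
    congr 1
    simp only [eq_iff_iff]
    constructor
    · intro h; simpa [Fin.rev_rev] using congrArg Fin.rev h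
    · rintro rfl; rfl
  have hef : ∀ j : Fin (2 * n), e j.rev = f j := by
    intro j
    rw [hf, he, Pi.single_apply, Pi.single_apply]
    congr 1
    simp only [eq_iff_iff]
    constructor
    · rintro h; simpa [Fin.rev_rev] using congrArg Fin.rev h
    · rintro rfl; simp [Fin.rev_rev]
  -- J M = Mᵀ J
  have hJM : Jmat n * M = vecMulVec w e + vecMulVec e w + c • vecMulVec e e := by
    rw [hM]
    simp only [Matrix.mul_add, Matrix.mul_smul, J_mul_vv]
    ext a b
    simp [vecMulVec_apply, hfe, hef, hwp]
  have hMT : Mᵀ = vecMulVec e v + vecMulVec w f + c • vecMulVec e f := by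
    rw [hM]
    simp only [Matrix.transpose_add, Matrix.transpose_smul]
    rw [show (vecMulVec v e)ᵀ = vecMulVec e v from by ext a b; simp [vecMulVec_apply, mul_comm],
      show (vecMulVec f w)ᵀ = vecMulVec w f from by ext a b; simp [vecMulVec_apply, mul_comm],
      show (vecMulVec f e)ᵀ = vecMulVec e f from by ext a b; simp [vecMulVec_apply, mul_comm]]
  have hMTJ : Mᵀ * Jmat n = vecMulVec e w + vecMulVec w e + c • vecMulVec e e := by
    rw [hMT]
    simp only [Matrix.add_mul, Matrix.smul_mul, vv_mul_J]
    ext a b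
    simp [vecMulVec_apply, hfe, hef, hwp]
  have dvw : v ⬝ᵥ w = 0 := by rw [dotProduct_comm]; exact dwv
  have dve : v ⬝ᵥ e = 0 := by rw [he, dotProduct_single_one, hv]
  have dwe : w ⬝ᵥ e = c := by rw [he, dotProduct_single_one]
  have dfw : f ⬝ᵥ w = 0 := by rw [dotProduct_comm]; exact dwf
  have dfe : f ⬝ᵥ e = 0 := by rw [dotProduct_comm]; exact def'
  -- Mᵀ J M = 0
  have hMJM : Mᵀ * (Jmat n * M) = 0 := by
    rw [hMT, hJM]
    simp only [Matrix.add_mul, Matrix.mul_add, Matrix.smul_mul, Matrix.mul_smul,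
      vv_mul_vv, dvw, dev, dve, dfw, dfe, def', zero_smul, smul_zero, add_zero, zero_add]
  refine ⟨?_, ?_, ?_⟩
  · rw [hs]
    have : (1 + M)ᵀ * Jmat n * (1 + M)
        = Jmat n + (Mᵀ * Jmat n + Jmat n * M) + Mᵀ * (Jmat n * M) := by
      simp only [Matrix.transpose_add, Matrix.transpose_one, Matrix.add_mul, Matrix.mul_add,
        Matrix.one_mul, Matrix.mul_one]
      noncomm_ring
    rw [this, hMJM, hMTJ, hJM, add_zero]
    rw [show vecMulVec e w + vecMulVec w e + c • vecMulVec e e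
        + (vecMulVec w e + vecMulVec e w + c • vecMulVec e e)
        = (vecMulVec e w + vecMulVec e w) + ((vecMulVec w e + vecMulVec w e)
          + (c • vecMulVec e e + c • vecMulVec e e)) from by abel]
    rw [addself, addself, addself]
    simp
  · rw [hs]
    have : (1 + M) * (1 + M) = 1 + (M + M) + M * M := by noncomm_ring
    rw [this, hMM, addself, add_zero, add_zero]
  · rw [hs]
    rw [Matrix.add_mulVec, Matrix.one_mulVec, hM, Matrix.add_mulVec, Matrix.add_mulVec,
      Matrix.smul_mulVec, vv_mulVec, vv_mulVec, vv_mulVec, dee, dwe, one_smul, smul_smul]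
    have hcf : c • f + c • f = 0 := by
      rw [← smul_add]
      funext a
      simp only [Pi.smul_apply, Pi.add_apply, Pi.zero_apply, smul_eq_mul]
      rw [CharTwo.add_self_eq_zero]
      ring
    rw [mul_one, show e + (v + c • f + c • f) = e + v + (c • f + c • f) from by abel,
      hcf, add_zero, he]
end

section
/- Let Π and Π' be m×n incomplete permutation matrices over F₂ (at most one 1 per row and per column). If there exist lower unitriangular matrices L (m×m) and R (n×n) with L Π = Π' R, then Π = Π'. -/
open Finset Matrix

lemma zmod2_eq_one' : ∀ x : ZMod 2, x ≠ 0 → x = 1 := by decide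

lemma zmod2_eq_one {x : ZMod 2} (hx : x ≠ 0) : x = 1 := zmod2_eq_one' x hx

/-- summing over an injective embedding when the function vanishes off its range -/
lemma sum_emb {α β M : Type*} [Fintype α] [Fintype β] [DecidableEq β] [AddCommMonoid M]
    (e : α → β) (he : Function.Injective e) (f : β → M)
    (hf : ∀ x, (∀ k, e k ≠ x) → f x = 0) : ∑ x, f x = ∑ k, f (e k) := by
  classical
  rw [← Finset.sum_image (f := f) (g := e) (fun a _ b _ h => he h)]
  refine (Finset.sum_subset (Finset.subset_univ _) ?_).symm
  intro x _ hx
  refine hf x fun k hk => hx ?_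
  exact Finset.mem_image.mpr ⟨k, Finset.mem_univ _, hk⟩

lemma rank_eq_card_support {a b : ℕ} (M : Matrix (Fin a) (Fin b) (ZMod 2))
    (hrow : ∀ i j j', M i j ≠ 0 → M i j' ≠ 0 → j = j')
    (hcol : ∀ i i' j, M i j ≠ 0 → M i' j ≠ 0 → i = i') :
    M.rank = (Finset.univ.filter fun p : Fin a × Fin b => M p.1 p.2 ≠ 0).card := by
  classical
  set S := Finset.univ.filter fun p : Fin a × Fin b => M p.1 p.2 ≠ 0 with hS
  set v : S → (Fin a → ZMod 2) := fun p => Mᵀ (p : Fin a × Fin b).2 with hv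
  have hmem : ∀ p : S, M (p : Fin a × Fin b).1 (p : Fin a × Fin b).2 ≠ 0 := fun p =>
    (Finset.mem_filter.mp p.2).2
  have hvs : ∀ p : S, v p = Pi.single (p : Fin a × Fin b).1 (1 : ZMod 2) := by
    intro p; funext x
    by_cases hx : x = (p : Fin a × Fin b).1
    · subst hx
      simp [hv, Matrix.transpose_apply, zmod2_eq_one (hmem p)]
    · have h0 : M x (p : Fin a × Fin b).2 = 0 := by
        by_contra h0
        exact hx (hcol _ _ _ h0 (hmem p))
      simp [hv, Matrix.transpose_apply, h0, Pi.single_eq_of_ne hx]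
  have hinj : Function.Injective (fun p : S => (p : Fin a × Fin b).1) := by
    intro p q hpq
    have hpq' : (p : Fin a × Fin b).1 = (q : Fin a × Fin b).1 := hpq
    have h2 : (p : Fin a × Fin b).2 = (q : Fin a × Fin b).2 := by
      refine hrow (p : Fin a × Fin b).1 _ _ (hmem p) ?_
      rw [hpq']; exact hmem q
    exact Subtype.ext (Prod.ext hpq' h2)
  have hli : LinearIndependent (ZMod 2) v := by
    have hb := (Pi.basisFun (ZMod 2) (Fin a)).linearIndependent
    have h2 : v = (⇑(Pi.basisFun (ZMod 2) (Fin a))) ∘ (fun p : S => (p : Fin a × Fin b).1) := by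
      funext p; simp [hvs p, Pi.basisFun_apply]
    rw [h2]
    exact hb.comp _ hinj
  have hspan : Submodule.span (ZMod 2) (Set.range Mᵀ)
      = Submodule.span (ZMod 2) (Set.range v) := by
    refine le_antisymm (Submodule.span_le.mpr ?_) (Submodule.span_mono ?_)
    · rintro _ ⟨j, rfl⟩
      by_cases hz : Mᵀ j = 0
      · rw [hz]; exact Submodule.zero_mem _
      · obtain ⟨i, hi⟩ := Function.ne_iff.mp hz
        have hpS : ((i, j) : Fin a × Fin b) ∈ S := Finset.mem_filter.mpr ⟨Finset.mem_univ _, hi⟩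
        exact Submodule.subset_span ⟨⟨(i, j), hpS⟩, rfl⟩
    · rintro _ ⟨p, rfl⟩
      exact ⟨(p : Fin a × Fin b).2, rfl⟩
  rw [Matrix.rank_eq_finrank_span_cols, show M.col = Mᵀ from rfl, hspan, finrank_span_eq_card hli, Fintype.card_coe]

/-- number of nonzero entries in rows `< i`, columns `≥ j` -/
def auxN {m n : ℕ} (P : Matrix (Fin m) (Fin n) (ZMod 2)) (i j : ℕ) : ℕ :=
  ((Finset.univ : Finset (Fin m × Fin n)).filter
    fun p => p.1.val < i ∧ j ≤ p.2.val ∧ P p.1 p.2 ≠ 0).card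

theorem stmt_13 {m n : ℕ} (P P' : Matrix (Fin m) (Fin n) (ZMod 2))
    (hProw : ∀ i j j', P i j ≠ 0 → P i j' ≠ 0 → j = j')
    (hPcol : ∀ i i' j, P i j ≠ 0 → P i' j ≠ 0 → i = i')
    (hP'row : ∀ i j j', P' i j ≠ 0 → P' i j' ≠ 0 → j = j')
    (hP'col : ∀ i i' j, P' i j ≠ 0 → P' i' j ≠ 0 → i = i')
    (L : Matrix (Fin m) (Fin m) (ZMod 2)) (R : Matrix (Fin n) (Fin n) (ZMod 2))
    (hLdiag : ∀ i, L i i = 1) (hLlow : ∀ i j, i < j → L i j = 0)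
    (hRdiag : ∀ i, R i i = 1) (hRlow : ∀ i j, i < j → R i j = 0)
    (h : L * P = P' * R) :
    P = P' := by
  classical
  -- Step 1: the counts agree on all "upper-right" blocks.
  have key : ∀ i j, i ≤ m → j ≤ n → auxN P i j = auxN P' i j := by
    intro i j hi hj
    set r : Fin i → Fin m := Fin.castLE hi with hr
    set c : Fin (n - j) → Fin n := fun l => ⟨j + l.val, by omega⟩ with hc
    have hrinj : Function.Injective r := Fin.castLE_injective hi
    have hcinj : Function.Injective c := by
      intro x y hxy
      have := congrArg Fin.val hxy
      simp only [hc] at this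
      exact Fin.ext (by omega)
    set A := P.submatrix r c with hA
    set A' := P'.submatrix r c with hA'
    set L11 := L.submatrix r r with hL11
    set R22 := R.submatrix c c with hR22
    -- Block equation
    have hblock : L11 * A = A' * R22 := by
      ext k l
      have hf1 : ∀ x, (∀ k', r k' ≠ x) → L (r k) x * P x (c l) = 0 := by
        intro x hx
        have hxi : i ≤ x.val := by
          by_contra hlt
          exact hx ⟨x.val, by omega⟩ (Fin.ext rfl)
        have hL0 : L (r k) x = 0 := hLlow _ _ (by
          have hk : (r k).val = k.val := rfl
          exact Fin.lt_def.mpr (by omega))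
        rw [hL0, zero_mul]
      have h1 : (L11 * A) k l = (L * P) (r k) (c l) := by
        rw [Matrix.mul_apply, Matrix.mul_apply,
          sum_emb r hrinj (fun x => L (r k) x * P x (c l)) hf1]
        rfl
      have hf2 : ∀ y, (∀ l', c l' ≠ y) → P' (r k) y * R y (c l) = 0 := by
        intro y hy
        have hyj : y.val < j := by
          by_contra hge
          exact hy ⟨y.val - j, by omega⟩ (Fin.ext (by simp only [hc]; omega))
        have hR0 : R y (c l) = 0 := hRlow _ _ (by
          have hl : (c l).val = j + l.val := rfl
          exact Fin.lt_def.mpr (by omega))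
        rw [hR0, mul_zero]
      have h2 : (A' * R22) k l = (P' * R) (r k) (c l) := by
        rw [Matrix.mul_apply, Matrix.mul_apply,
          sum_emb c hcinj (fun y => P' (r k) y * R y (c l)) hf2]
        rfl
      rw [h1, h2, h]
    -- determinants
    have hLdet : IsUnit L11.det := by
      have : L11.det = ∏ k : Fin i, L11 k k := by
        apply Matrix.det_of_lowerTriangular
        intro x y hxy
        exact hLlow _ _ (by
          simp only [OrderDual.toDual_lt_toDual] at hxy
          exact Fin.lt_def.mpr (Fin.lt_def.mp hxy))
      rw [this]
      simp [hL11, Matrix.submatrix_apply, hLdiag]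
    have hRdet : IsUnit R22.det := by
      have : R22.det = ∏ k : Fin (n - j), R22 k k := by
        apply Matrix.det_of_lowerTriangular
        intro x y hxy
        refine hRlow _ _ ?_
        simp only [OrderDual.toDual_lt_toDual] at hxy
        have := Fin.lt_def.mp hxy
        exact Fin.lt_def.mpr (by simp [hc]; omega)
      rw [this]
      simp [hR22, Matrix.submatrix_apply, hRdiag]
    -- ranks
    have hrank : A.rank = A'.rank := by
      have e1 : (L11 * A).rank = A.rank := Matrix.rank_mul_eq_right_of_isUnit_det L11 A hLdet
      have e2 : (A' * R22).rank = A'.rank := Matrix.rank_mul_eq_left_of_isUnit_det R22 A' hRdet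
      rw [← e1, hblock, e2]
    -- card supports
    have cardeq : ∀ (Q : Matrix (Fin m) (Fin n) (ZMod 2)),
        ((Finset.univ : Finset (Fin i × Fin (n - j))).filter
          fun q => (Q.submatrix r c) q.1 q.2 ≠ 0).card = auxN Q i j := by
      intro Q
      unfold auxN
      refine Finset.card_bij' (fun q _ => (r q.1, c q.2))
        (fun p hp => (⟨p.1.val, (Finset.mem_filter.mp hp).2.1⟩,
                      ⟨p.2.val - j, by
                        have := (Finset.mem_filter.mp hp).2.2.1
                        omega⟩)) ?_ ?_ ?_ ?_
      · intro q hq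
        have hq' := (Finset.mem_filter.mp hq).2
        refine Finset.mem_filter.mpr ⟨Finset.mem_univ _, ?_, ?_, hq'⟩
        · exact q.1.isLt
        · simp [hc]
      · intro p hp
        have hp' := (Finset.mem_filter.mp hp).2
        refine Finset.mem_filter.mpr ⟨Finset.mem_univ _, ?_⟩
        have hcv : c ⟨p.2.val - j, by omega⟩ = p.2 := Fin.ext (by simp [hc]; omega)
        have hrv : r ⟨p.1.val, hp'.1⟩ = p.1 := Fin.ext rfl
        simpa [Matrix.submatrix_apply, hcv, hrv] using hp'.2.2
      · intro q hq
        ext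
        · rfl
        · simp [hc]
      · intro p hp
        have hp' := (Finset.mem_filter.mp hp).2
        ext
        · rfl
        · simp [hc]; omega
    have rA : A.rank = auxN P i j := by
      rw [← cardeq P]
      exact rank_eq_card_support A
        (fun k l l' h1 h2 => hcinj (hProw (r k) (c l) (c l') h1 h2))
        (fun k k' l h1 h2 => hrinj (hPcol (r k) (r k') (c l) h1 h2))
    have rA' : A'.rank = auxN P' i j := by
      rw [← cardeq P']
      exact rank_eq_card_support A'
        (fun k l l' h1 h2 => hcinj (hP'row (r k) (c l) (c l') h1 h2))
        (fun k k' l h1 h2 => hrinj (hP'col (r k) (r k') (c l) h1 h2))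
    rw [← rA, ← rA', hrank]
  -- Step 2: inclusion-exclusion recovers each entry from the counts.
  have single : ∀ (Q : Matrix (Fin m) (Fin n) (ZMod 2)) (i : Fin m) (j : Fin n),
      (∑ p : Fin m × Fin n,
        if p.1.val = i.val ∧ p.2.val = j.val ∧ Q p.1 p.2 ≠ 0 then 1 else 0)
      = (if Q i j ≠ 0 then 1 else 0) := by
    intro Q i j
    rw [Finset.sum_eq_single (i, j)]
    · simp
    · intro p _ hp
      rw [if_neg]
      rintro ⟨h1, h2, -⟩
      exact hp (Prod.ext (Fin.ext h1) (Fin.ext h2))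
    · simp
  have identity : ∀ (Q : Matrix (Fin m) (Fin n) (ZMod 2)) (i : Fin m) (j : Fin n),
      auxN Q (i.val + 1) j.val + auxN Q i.val (j.val + 1)
      = auxN Q i.val j.val + auxN Q (i.val + 1) (j.val + 1)
        + (if Q i j ≠ 0 then 1 else 0) := by
    intro Q i j
    unfold auxN
    rw [← single Q i j]
    simp only [Finset.card_filter]
    rw [← Finset.sum_add_distrib, ← Finset.sum_add_distrib, ← Finset.sum_add_distrib]
    apply Finset.sum_congr rfl
    intro p _
    by_cases hQ : Q p.1 p.2 = 0
    · simp [hQ]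
    · simp only [hQ, ne_eq, not_false_eq_true, and_true]
      split_ifs <;> omega
  ext i j
  have hi1 : i.val + 1 ≤ m := i.isLt
  have hj1 : j.val + 1 ≤ n := j.isLt
  have e1 := identity P i j
  have e2 := identity P' i j
  rw [key _ _ (by omega) (by omega), key _ _ (by omega) (by omega),
      key _ _ (by omega) (by omega), key _ _ (by omega) (by omega)] at e1
  have hite : (if P i j ≠ 0 then 1 else 0) = (if P' i j ≠ 0 then (1:ℕ) else 0) := by omega
  by_cases hp : P i j = 0
  · by_cases hp' : P' i j = 0
    · rw [hp, hp']
    · simp [hp, hp'] at hite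
  · by_cases hp' : P' i j = 0
    · simp [hp, hp'] at hite
    · rw [zmod2_eq_one hp, zmod2_eq_one hp']
end

section
/- Let β : [r] → [n] be injective and let T_R(β) = {(i,j) : i ∈ Im(β), j < i, j ∉ {β(1),...,β(β^{-1}(i)−1)}}. Let R ∈ L(n, T_R(β)). If there exist m, a lower unitriangular L ∈ F₂^{m×m}, and a strictly increasing α : [r] → [m] such that L Π(α,β) = Π(α,β) R, where Π(α,β) = Σ_{i=1}^r e_{α(i)} e_{β(i)}^T, then R = I. -/
/-- The span of the standard basis matrices `e_i e_jᵀ` for `(i,j) ∈ T`, over `F₂`. -/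
def spanT {n : ℕ} (T : Set (Fin n × Fin n)) :
    Submodule (ZMod 2) (Matrix (Fin n) (Fin n) (ZMod 2)) :=
  Submodule.span (ZMod 2) {E | ∃ p ∈ T, E = Matrix.single p.1 p.2 1}

/-- `L(n,T) = I + span{e_i e_jᵀ : (i,j) ∈ T}`. -/
def LnT {n : ℕ} (T : Set (Fin n × Fin n)) : Set (Matrix (Fin n) (Fin n) (ZMod 2)) :=
  {M | ∃ A ∈ spanT T, M = 1 + A}

/-- `T_R(β) = {(i,j) : i ∈ Im(β), j < i, j ∉ {β(1),…,β(β⁻¹(i)−1)}}`. -/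
def TR {r n : ℕ} (β : Fin r → Fin n) : Set (Fin n × Fin n) :=
  {p | ∃ k, β k = p.1 ∧ p.2 < p.1 ∧ ∀ l, l < k → β l ≠ p.2}

/-- A matrix in `spanT T` vanishes outside `T`. -/
lemma spanT_support {n : ℕ} {T : Set (Fin n × Fin n)}
    {A : Matrix (Fin n) (Fin n) (ZMod 2)} (hA : A ∈ spanT T)
    {i j : Fin n} (hij : (i, j) ∉ T) : A i j = 0 := by
  induction hA using Submodule.span_induction with
  | mem E hE =>
    obtain ⟨p, hp, rfl⟩ := hE
    apply Matrix.single_apply_of_ne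
    rintro ⟨rfl, rfl⟩
    exact hij hp
  | zero => rfl
  | add x y _ _ hx hy => simp [Matrix.add_apply, hx, hy]
  | smul c x _ hx => simp [Matrix.smul_apply, hx]

theorem stmt_14 {r n : ℕ} (β : Fin r → Fin n) (hβ : Function.Injective β)
    (R : Matrix (Fin n) (Fin n) (ZMod 2)) (hR : R ∈ LnT (TR β))
    (m : ℕ) (L : Matrix (Fin m) (Fin m) (ZMod 2))
    (hLdiag : ∀ i, L i i = 1) (hLlow : ∀ i j, i < j → L i j = 0)
    (α : Fin r → Fin m) (hα : StrictMono α)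
    (h : L * (∑ k, Matrix.single (α k) (β k) (1 : ZMod 2))
        = (∑ k, Matrix.single (α k) (β k) (1 : ZMod 2)) * R) :
    R = 1 := by
  obtain ⟨A, hA, rfl⟩ := hR
  -- the key entrywise identity coming from `h`
  have key : ∀ (k : Fin r) (j : Fin n),
      (1 + A) (β k) j = ∑ l, if β l = j then L (α k) (α l) else 0 := by
    intro k j
    have hkj := congrFun (congrFun h (α k)) j
    simp only [Matrix.mul_apply, Matrix.sum_apply, Matrix.single, Matrix.of_apply,
      Finset.mul_sum, Finset.sum_mul, ite_and, mul_ite, ite_mul, mul_zero, zero_mul, mul_one,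
      one_mul] at hkj
    rw [Finset.sum_comm] at hkj
    simp only [Finset.sum_ite_eq, Finset.sum_ite_eq', Finset.mem_univ, if_true,
      hα.injective.eq_iff] at hkj
    exact hkj.symm
  have hA0 : A = 0 := by
    ext i j
    simp only [Matrix.zero_apply]
    by_cases hi : ∃ k, β k = i
    · obtain ⟨k, rfl⟩ := hi
      by_cases hj : ∃ l, β l = j
      · obtain ⟨l, rfl⟩ := hj
        rcases lt_trichotomy k l with hkl | rfl | hkl
        · -- use the key identity; `L (α k) (α l) = 0` since `α k < α l`
          have hk := key k (β l)
          simp only [hβ.eq_iff, Finset.sum_ite_eq', Finset.mem_univ, if_true] at hk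
          have hne : β k ≠ β l := fun e => (hkl.ne (hβ e))
          rw [hLlow _ _ (hα hkl)] at hk
          simpa [Matrix.add_apply, Matrix.one_apply, hne] using hk
        · -- diagonal: `(β k, β k) ∉ TR β`
          apply spanT_support hA
          rintro ⟨k', -, hlt, -⟩
          exact lt_irrefl _ hlt
        · -- `l < k`: `(β k, β l) ∉ TR β`
          apply spanT_support hA
          rintro ⟨k', hk', -, hall⟩
          exact hall l (by rwa [hβ hk']) rfl
      · -- `j` not in the image of `β`: the key identity gives `(1+A) (β k) j = 0`
        have hk := key k j
        have hz : (∑ l, if β l = j then L (α k) (α l) else 0) = 0 := by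
          apply Finset.sum_eq_zero
          intro l _
          rw [if_neg (fun e => hj ⟨l, e⟩)]
        have hne : β k ≠ j := fun e => hj ⟨k, e⟩
        rw [hz] at hk
        simpa [Matrix.add_apply, Matrix.one_apply, hne] using hk
    · -- `i` not in the image of `β`: `(i, j) ∉ TR β`
      apply spanT_support hA
      rintro ⟨k, hk, -, -⟩
      exact hi ⟨k, hk⟩
  rw [hA0, add_zero]
end

section
/- Let q(i) = min(i, 2n+1−i) for i ∈ [2n], and let β : [r] → [2n] be qubit-injective, i.e., q∘β is injective. Define T_M(β) = {(i,j) : i ∈ Im(β), j < i, q(j) ∉ {q(β(1)),...,q(β(β^{-1}(i)−1))}} and let T(β) be the union of T_M(β) with its reversal {(i,j) : (2n+1−j, 2n+1−i) ∈ T_M(β)}. Then T(β) is a transitive subset of {(i,j) ∈ [2n]² : i > j} and is closed under reversal. -/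
/-- `q(i) = min(i, 2n+1−i)`: the qubit on which index `i` acts (0-based via `Fin.rev`). -/
def qb {n : ℕ} (i : Fin (2 * n)) : ℕ := min (i : ℕ) (i.rev : ℕ)

/-- `T_M(β) = {(i,j) : i ∈ Im(β), j < i, q(j) ∉ {q(β(1)),…,q(β(β⁻¹(i)−1))}}`. -/
def TM {r n : ℕ} (β : Fin r → Fin (2 * n)) : Set (Fin (2 * n) × Fin (2 * n)) :=
  {p | ∃ k, β k = p.1 ∧ p.2 < p.1 ∧ ∀ l, l < k → qb (β l) ≠ qb p.2}

/-- `T(β)`: the union of `T_M(β)` with its reversal. -/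
def Tfull {r n : ℕ} (β : Fin r → Fin (2 * n)) : Set (Fin (2 * n) × Fin (2 * n)) :=
  TM β ∪ {p | (p.2.rev, p.1.rev) ∈ TM β}

lemma qb_rev {n : ℕ} (i : Fin (2 * n)) : qb i.rev = qb i := by
  simp [qb, Fin.rev_rev, Nat.min_comm]

lemma rev_ne {n : ℕ} (i : Fin (2 * n)) : i.rev ≠ i := by
  intro h
  have h1 := congrArg Fin.val h
  have h2 := i.isLt
  simp [Fin.val_rev] at h1
  omega

lemma TM_trans {r n : ℕ} {β : Fin r → Fin (2 * n)}
    (hβ : Function.Injective fun k => qb (β k))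
    {i j m : Fin (2 * n)} (h1 : (i, j) ∈ TM β) (h2 : (j, m) ∈ TM β) :
    (i, m) ∈ TM β := by
  obtain ⟨k1, hk1, hji, hl1⟩ := h1
  obtain ⟨k2, hk2, hmj, hl2⟩ := h2
  refine ⟨k1, hk1, lt_trans hmj hji, fun l hl => ?_⟩
  have hk12 : k1 ≤ k2 := by
    by_contra h
    exact hl1 k2 (lt_of_not_ge h) (by rw [hk2])
  exact hl2 l (lt_of_lt_of_le hl hk12)

lemma TM_mixed {r n : ℕ} {β : Fin r → Fin (2 * n)}
    (hβ : Function.Injective fun k => qb (β k))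
    {i j m : Fin (2 * n)} (h1 : (i, j) ∈ TM β) (h2 : (m.rev, j.rev) ∈ TM β) :
    (i, m) ∈ Tfull β := by
  obtain ⟨k1, hk1, hji, hl1⟩ := h1
  obtain ⟨k2, hk2, hrev, hl2⟩ := h2
  dsimp only at hk1 hji hl1 hk2 hrev hl2
  have hmj : m < j := Fin.rev_lt_rev.mp hrev
  rcases le_or_gt k1 k2 with h | h
  · left
    refine ⟨k1, hk1, lt_trans hmj hji, fun l hl => ?_⟩
    have hq : qb m = qb (β k2) := by rw [hk2, qb_rev]
    rw [hq]
    intro he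
    have := hβ he
    omega
  · right
    refine ⟨k2, hk2, Fin.rev_lt_rev.mpr (lt_trans hmj hji), fun l hl => ?_⟩
    show qb (β l) ≠ qb i.rev
    rw [qb_rev, ← hk1]
    intro he
    have := hβ he
    omega

theorem stmt_16 {r n : ℕ} (β : Fin r → Fin (2 * n))
    (hβ : Function.Injective fun k => qb (β k)) :
    (∀ p ∈ Tfull β, p.2 < p.1) ∧
    (∀ i j k : Fin (2 * n), (i, j) ∈ Tfull β → (j, k) ∈ Tfull β → (i, k) ∈ Tfull β) ∧
    (∀ i j : Fin (2 * n), (i, j) ∈ Tfull β ↔ (j.rev, i.rev) ∈ Tfull β) := by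
  refine ⟨?_, ?_, ?_⟩
  · rintro p (⟨k, hk, hlt, hq⟩ | ⟨k, hk, hlt, hq⟩)
    · exact hlt
    · exact Fin.rev_lt_rev.mp hlt
  · rintro i j k (h1 | h1) (h2 | h2)
    · exact Or.inl (TM_trans hβ h1 h2)
    · exact TM_mixed hβ h1 h2
    · -- h1 : (j.rev, i.rev) ∈ TM β, h2 : (j, k) ∈ TM β : contradiction
      exfalso
      obtain ⟨k1, hk1, -, -⟩ := h1
      obtain ⟨k2, hk2, -, -⟩ := h2
      dsimp only at hk1 hk2
      have hq : (fun k => qb (β k)) k1 = (fun k => qb (β k)) k2 := by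
        simp only [hk1, hk2, qb_rev]
      have hkk := hβ hq
      rw [hkk, hk2] at hk1
      exact rev_ne j hk1.symm
    · exact Or.inr (TM_trans hβ h2 h1)
  · intro i j
    constructor
    · rintro (h | h)
      · exact Or.inr (by simpa [Fin.rev_rev] using h)
      · exact Or.inl h
    · rintro (h | h)
      · exact Or.inr h
      · exact Or.inl (by simpa [Fin.rev_rev] using h)
end

section
/- Let A ∈ F₂^{m×2n} satisfy A J_{2n} A^T = 0 (a stabilizer parity check matrix). Suppose for some strictly increasing α : [r] → [m] and injective β : [r] → [2n], A is (α,β)-partially reduced, meaning rows α(1),...,α(r) and columns β(1),...,β(r) of A coincide with those of Π(α,β) = Σ_i e_{α(i)} e_{β(i)}^T, and rows 1..α(r) not in Im(α) are zero. Then β is qubit-injective, and for each i ∈ [r], column 2n+1−β(i) of A is zero. -/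
open Matrix

theorem stmt_17 {m n r : ℕ} (A : Matrix (Fin m) (Fin (2 * n)) (ZMod 2))
    (hA : A * Jmat n * Aᵀ = 0)
    (α : Fin r → Fin m) (hα : StrictMono α)
    (β : Fin r → Fin (2 * n)) (hβ : Function.Injective β)
    (hrowα : ∀ k : Fin r, ∀ j, A (α k) j = if j = β k then 1 else 0)
    (hrow0 : ∀ a : Fin m, (∃ k, a ≤ α k) → (∀ k, α k ≠ a) → ∀ j, A a j = 0)
    (hcol : ∀ k : Fin r, ∀ a, A a (β k) = if a = α k then 1 else 0) :
    (Function.Injective fun k => qb (β k)) ∧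
    (∀ k : Fin r, ∀ a, A a (β k).rev = 0) := by
  have hz : ∀ k : Fin r, ∀ a, A a (β k).rev = 0 := by
    intro k a
    have h := congrFun (congrFun hA (α k)) a
    simp only [Matrix.mul_apply, Matrix.transpose_apply, Jmat, Matrix.of_apply,
      Matrix.zero_apply, hrowα] at h
    simp only [mul_ite, mul_one, mul_zero, ite_mul, one_mul, zero_mul] at h
    have hinner : ∀ x : Fin (2 * n),
        (∑ x1 : Fin (2 * n), if x = x1.rev then (if x1 = β k then (1 : ZMod 2) else 0) else 0)
          = if x = (β k).rev then 1 else 0 := by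
      intro x
      rw [Finset.sum_eq_single (β k)]
      · simp
      · intro b _ hb
        simp [hb]
      · simp
    simp only [hinner] at h
    simpa [ite_mul, one_mul, zero_mul, Finset.sum_ite_eq'] using h
  refine ⟨?_, hz⟩
  intro k l h
  simp only [qb] at h
  have hone : A (α k) (β k) = 1 := by simp [hcol]
  have hone' : A (α l) (β l) = 1 := by simp [hcol]
  rcases le_total ((β k : ℕ)) (((β k).rev : ℕ)) with h1 | h1 <;>
    rcases le_total ((β l : ℕ)) (((β l).rev : ℕ)) with h2 | h2
  · rw [min_eq_left h1, min_eq_left h2] at h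
    exact hβ (Fin.ext h)
  · rw [min_eq_left h1, min_eq_right h2] at h
    have : β k = (β l).rev := Fin.ext h
    rw [this, hz l] at hone
    exact absurd hone (by norm_num)
  · rw [min_eq_right h1, min_eq_left h2] at h
    have : β l = (β k).rev := Fin.ext h.symm
    rw [this, hz k] at hone'
    exact absurd hone' (by norm_num)
  · rw [min_eq_right h1, min_eq_right h2] at h
    have : (β k).rev = (β l).rev := Fin.ext h
    exact hβ (Fin.rev_injective this)
end

section
/- Let A ∈ Sp(2n) over F₂ and suppose for some r ≤ n and injective β : [r] → [2n], A satisfies A e_{β(i)} = e_i and e_i^T A = e_{β(i)}^T for all i ∈ [r]. Then β is qubit-injective, and additionally A e_{2n+1−β(i)} = e_{2n+1−i} and e_{2n+1−i}^T A = e_{2n+1−β(i)}^T for all i ∈ [r]. -/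
open Matrix

lemma rev_comm {m : ℕ} (i j : Fin m) : (i = j.rev) ↔ (j = i.rev) := by
  constructor <;> (rintro rfl; simp)
lemma Jmat_mulVec_single (n : ℕ) (j : Fin (2*n)) :
    (Jmat n).mulVec (Pi.single j 1) = Pi.single j.rev 1 := by
  ext i
  simp [Jmat, mulVec, dotProduct, Pi.single_apply, rev_comm i j]
lemma Jmat_transpose (n : ℕ) : (Jmat n)ᵀ = Jmat n := by
  ext i j
  simp [Jmat, rev_comm i j]
lemma Jmat_mul_Jmat (n : ℕ) : Jmat n * Jmat n = 1 := by
  ext a b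
  rw [Matrix.mul_apply, Finset.sum_eq_single a.rev]
  · simp [Jmat, Matrix.one_apply, rev_comm b a, eq_comm]
  · intro c _ hc
    simp [Jmat, rev_comm _ c, hc]
  · simp
lemma single_vecMul_Jmat (n : ℕ) (j : Fin (2*n)) :
    Matrix.vecMul (Pi.single j 1) (Jmat n) = Pi.single j.rev 1 := by
  rw [← Jmat_transpose n, Matrix.vecMul_transpose, Jmat_mulVec_single]
lemma AJAt {n : ℕ} (A : Matrix (Fin (2 * n)) (Fin (2 * n)) (ZMod 2)) (hA : A ∈ Sp n) :
    A * Jmat n * Aᵀ = Jmat n := by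
  have hA' : Aᵀ * Jmat n * A = Jmat n := hA
  have h1 : (Jmat n * Aᵀ * Jmat n) * A = 1 := by
    calc (Jmat n * Aᵀ * Jmat n) * A = Jmat n * (Aᵀ * Jmat n * A) := by simp only [Matrix.mul_assoc]
    _ = 1 := by rw [hA', Jmat_mul_Jmat]
  have h2 : A * (Jmat n * Aᵀ * Jmat n) = 1 := mul_eq_one_comm.mp h1
  have h3 := congrArg (· * Jmat n) h2
  simp only [Matrix.mul_assoc, Jmat_mul_Jmat, Matrix.mul_one, Matrix.one_mul] at h3
  rw [← Matrix.mul_assoc] at h3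
  exact h3

theorem stmt_18 {n r : ℕ} (hr : r ≤ n)
    (A : Matrix (Fin (2 * n)) (Fin (2 * n)) (ZMod 2)) (hA : A ∈ Sp n)
    (β : Fin r → Fin (2 * n)) (hβ : Function.Injective β)
    (hcol : ∀ i : Fin r,
      A.mulVec (Pi.single (β i) 1) = Pi.single (Fin.castLE (by omega) i) 1)
    (hrow : ∀ i : Fin r,
      Matrix.vecMul (Pi.single (Fin.castLE (by omega : r ≤ 2 * n) i) 1) A
        = Pi.single (β i) 1) :
    (Function.Injective fun k => qb (β k)) ∧
    (∀ i : Fin r,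
      A.mulVec (Pi.single (β i).rev 1)
          = Pi.single (Fin.castLE (by omega : r ≤ 2 * n) i).rev 1 ∧
      Matrix.vecMul (Pi.single (Fin.castLE (by omega : r ≤ 2 * n) i).rev 1) A
          = Pi.single (β i).rev 1) := by
  have hA' : Aᵀ * Jmat n * A = Jmat n := hA
  have hAJ : A * Jmat n * Aᵀ = Jmat n := AJAt A hA
  have key : ∀ i : Fin r,
      A.mulVec (Pi.single (β i).rev 1)
          = Pi.single (Fin.castLE (by omega : r ≤ 2 * n) i).rev 1 ∧
      Matrix.vecMul (Pi.single (Fin.castLE (by omega : r ≤ 2 * n) i).rev 1) A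
          = Pi.single (β i).rev 1 := by
    intro i
    set i' : Fin (2*n) := Fin.castLE (by omega : r ≤ 2 * n) i with hi'
    constructor
    · have h1 : Pi.single (β i) 1 = Aᵀ.mulVec (Pi.single i' 1) := by
        rw [Matrix.mulVec_transpose, hrow i]
      calc A.mulVec (Pi.single (β i).rev 1)
          = A.mulVec ((Jmat n).mulVec (Pi.single (β i) 1)) := by
            rw [Jmat_mulVec_single]
        _ = A.mulVec ((Jmat n).mulVec (Aᵀ.mulVec (Pi.single i' 1))) := by rw [← h1]
        _ = (A * Jmat n * Aᵀ).mulVec (Pi.single i' 1) := by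
            rw [Matrix.mulVec_mulVec, Matrix.mulVec_mulVec]
        _ = Pi.single i'.rev 1 := by rw [hAJ, Jmat_mulVec_single]
    · have h1 : Pi.single i' 1 = Matrix.vecMul (Pi.single (β i) 1) Aᵀ := by
        rw [Matrix.vecMul_transpose, hcol i]
      calc Matrix.vecMul (Pi.single i'.rev 1) A
          = Matrix.vecMul (Matrix.vecMul (Pi.single i' 1) (Jmat n)) A := by
            rw [single_vecMul_Jmat]
        _ = Matrix.vecMul (Matrix.vecMul (Matrix.vecMul (Pi.single (β i) 1) Aᵀ) (Jmat n)) A := by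
            rw [← h1]
        _ = Matrix.vecMul (Pi.single (β i) 1) (Aᵀ * Jmat n * A) := by
            rw [Matrix.vecMul_vecMul, Matrix.vecMul_vecMul, Matrix.mul_assoc]
        _ = Pi.single (β i).rev 1 := by rw [hA', single_vecMul_Jmat]
  refine ⟨?_, key⟩
  intro k l h
  simp only [qb] at h
  have hkv := (β k).isLt
  have hlv := (β l).isLt
  have hkr : ((β k).rev : ℕ) = 2 * n - ((β k) + 1) := Fin.val_rev _
  have hlr : ((β l).rev : ℕ) = 2 * n - ((β l) + 1) := Fin.val_rev _
  have hcase : ((β k) : ℕ) = ((β l) : ℕ) ∨ ((β k) : ℕ) = ((β l).rev : ℕ) := by omega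
  rcases hcase with hc | hc
  · exact hβ (Fin.ext hc)
  · exfalso
    have hc' : β k = (β l).rev := Fin.ext hc
    have h2 : (Pi.single (Fin.castLE (by omega : r ≤ 2 * n) k) 1 : Fin (2*n) → ZMod 2)
        = Pi.single (Fin.castLE (by omega : r ≤ 2 * n) l).rev 1 := by
      rw [← hcol k, hc', (key l).1]
    have h3 := congrFun h2 (Fin.castLE (by omega : r ≤ 2 * n) k)
    simp only [Pi.single_apply, if_pos rfl] at h3
    by_cases hcond : (Fin.castLE (by omega : r ≤ 2 * n) k : Fin (2*n))
        = (Fin.castLE (by omega : r ≤ 2 * n) l).rev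
    · have hv := congrArg Fin.val hcond
      simp only [Fin.coe_castLE, Fin.val_rev] at hv
      have hk2 := k.isLt
      have hl2 := l.isLt
      omega
    · rw [if_neg hcond] at h3
      exact one_ne_zero h3
end
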